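/- arXiv:1402.1701 — 4 statements merged into one kernel-verified Lean document; each statement's English description precedes it below -/
import Mathlib

section
/- For every natural number m ≥ 0, the coefficient of t^m in the formal power series (1-t)^{-1/2} · (1-t)^{-1/2} equals 1; equivalently, ∑_{k=0}^{m} C(2k,k)·C(2(m-k), m-k) = 4^m. -/
open Finset Nat

private def S (m : ℕ) : ℕ := ∑ k ∈ range (m + 1), centralBinom k * centralBinom (m - k)

private lemma sym (m : ℕ) :
    2 * ∑ k ∈ range (m + 1), k * (centralBinom k * centralBinom (m - k)) = m * S m := by
  have h := Finset.sum_range_reflect (fun k => k * (centralBinom k * centralBinom (m - k))) (m + 1)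
  have h' : ∑ k ∈ range (m + 1), (m - k) * (centralBinom (m - k) * centralBinom k)
      = ∑ k ∈ range (m + 1), k * (centralBinom k * centralBinom (m - k)) := by
    rw [← h]
    simp only [Nat.add_sub_cancel]
    apply Finset.sum_congr rfl
    intro k hk
    have hkm : k ≤ m := Nat.lt_succ_iff.mp (Finset.mem_range.mp hk)
    rw [Nat.sub_sub_self hkm]
  have key : ∑ k ∈ range (m + 1), (k * (centralBinom k * centralBinom (m - k))
      + (m - k) * (centralBinom k * centralBinom (m - k))) = m * S m := by
    rw [S, Finset.mul_sum]
    apply Finset.sum_congr rfl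
    intro k hk
    have hkm : k ≤ m := Nat.lt_succ_iff.mp (Finset.mem_range.mp hk)
    rw [← add_mul, Nat.add_sub_cancel' hkm]
  rw [Finset.sum_add_distrib] at key
  rw [two_mul]
  nth_rewrite 2 [← h']
  rw [← key]
  congr 1
  apply Finset.sum_congr rfl
  intro k _
  ring

private lemma step (m : ℕ) : S (m + 1) = 4 * S m := by
  have hrec : ∀ k, (k + 1) * centralBinom (k + 1) = (4 * k + 2) * centralBinom k := by
    intro k
    have := Nat.succ_mul_centralBinom_succ k
    linarith [this]
  -- (m+1) * S (m+1) = 2 * ∑_{k=0}^{m+1} k * c k * c (m+1-k)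
  have h1 : (m + 1) * S (m + 1)
      = 2 * ∑ k ∈ range (m + 2), k * (centralBinom k * centralBinom (m + 1 - k)) := by
    rw [sym (m + 1)]
  -- shift index: that sum equals ∑_{k=0}^{m} (k+1) c_{k+1} c_{m-k}
  have h2 : ∑ k ∈ range (m + 2), k * (centralBinom k * centralBinom (m + 1 - k))
      = ∑ k ∈ range (m + 1), (k + 1) * centralBinom (k + 1) * centralBinom (m - k) := by
    rw [Finset.sum_range_succ'] -- splits off k = 0
    simp [mul_assoc]
  have h3 : ∑ k ∈ range (m + 1), (k + 1) * centralBinom (k + 1) * centralBinom (m - k)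
      = ∑ k ∈ range (m + 1), (4 * k + 2) * centralBinom k * centralBinom (m - k) := by
    apply Finset.sum_congr rfl
    intro k _
    rw [hrec k]
  have h4 : ∑ k ∈ range (m + 1), (4 * k + 2) * centralBinom k * centralBinom (m - k)
      = 2 * (2 * ∑ k ∈ range (m + 1), k * (centralBinom k * centralBinom (m - k))) + 2 * S m := by
    rw [S, Finset.mul_sum, Finset.mul_sum, Finset.mul_sum, ← Finset.sum_add_distrib]
    apply Finset.sum_congr rfl
    intro k _
    ring
  have h5 : (m + 1) * S (m + 1) = (m + 1) * (4 * S m) := by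
    rw [h1, h2, h3, h4, sym m]
    ring
  exact Nat.eq_of_mul_eq_mul_left (Nat.succ_pos m) h5

theorem central_binom_convolution (m : ℕ) :
    ∑ k ∈ Finset.range (m + 1), (2 * k).choose k * (2 * (m - k)).choose (m - k) = 4 ^ m := by
  have hS : ∀ n, S n = 4 ^ n := by
    intro n
    induction n with
    | zero => simp [S, centralBinom]
    | succ n ih => rw [step, ih]; ring
  have := hS m
  rw [S] at this
  simpa [centralBinom] using this
end

section
/- Define E_m(x) = 4^{-m} · ∑_{k=0}^{m} C(2k,k)·C(2(m-k), m-k)·x^k for a real number x. Then for any fixed x with 0 ≤ x < 1, the sequence E_m(x) is strictly decreasing in m: E_{m+1}(x) < E_m(x) for all m ≥ 0. -/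
noncomputable def E (m : ℕ) (x : ℝ) : ℝ :=
  (4 : ℝ) ^ (-(m : ℤ)) *
    ∑ k ∈ Finset.range (m + 1),
      ((2 * k).choose k : ℝ) * ((2 * (m - k)).choose (m - k) : ℝ) * x ^ k

lemma cb_rec (n : ℕ) :
    Nat.centralBinom (n + 1) + 2 * catalan n = 4 * Nat.centralBinom n := by
  have h1 := Nat.succ_mul_centralBinom_succ n
  have h2 := succ_mul_catalan_eq_centralBinom n
  have key : (n + 1) * (Nat.centralBinom (n + 1) + 2 * catalan n)
      = (n + 1) * (4 * Nat.centralBinom n) := by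
    ring_nf
    ring_nf at h1 h2
    nlinarith [h1, h2]
  exact Nat.eq_of_mul_eq_mul_left (Nat.succ_pos n) key

lemma catalan_conv (m : ℕ) :
    ∑ i ∈ Finset.range (m + 1), catalan i * catalan (m - i) = catalan (m + 1) := by
  rw [catalan_succ]
  exact (Fin.sum_univ_eq_sum_range (fun i => catalan i * catalan (m - i)) (m + 1)).symm

lemma T_id (m : ℕ) :
    2 * ∑ k ∈ Finset.range (m + 1), Nat.centralBinom k * catalan (m - k)
      = Nat.centralBinom (m + 1) := by
  induction m with
  | zero => simp [Finset.sum_range_one]; decide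
  | succ m ih =>
    rw [Finset.sum_range_succ']
    have hshift : ∀ j, m + 1 - (j + 1) = m - j := fun j => by omega
    simp only [hshift, Nat.sub_zero, Nat.centralBinom_zero, one_mul]
    -- key: ∑ c_{j+1} Cat_{m-j} + 2 * Cat_{m+1} = ∑ 4 c_j Cat_{m-j}
    have key : (∑ j ∈ Finset.range (m + 1),
          Nat.centralBinom (j + 1) * catalan (m - j)) + 2 * catalan (m + 1)
        = ∑ j ∈ Finset.range (m + 1), 4 * (Nat.centralBinom j * catalan (m - j)) := by
      rw [← catalan_conv m, Finset.mul_sum, ← Finset.sum_add_distrib]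
      refine Finset.sum_congr rfl fun j hj => ?_
      have := cb_rec j
      nlinarith [this]
    have hsum4 : ∑ j ∈ Finset.range (m + 1), 4 * (Nat.centralBinom j * catalan (m - j))
        = 4 * ∑ j ∈ Finset.range (m + 1), Nat.centralBinom j * catalan (m - j) := by
      rw [Finset.mul_sum]
    rw [hsum4] at key
    have hrec := cb_rec (m + 1)
    omega

lemma T_id_real (m : ℕ) :
    ∑ k ∈ Finset.range (m + 1),
        2 * (((2 * k).choose k : ℝ) * (catalan (m - k) : ℝ))
      = ((2 * (m + 1)).choose (m + 1) : ℝ) := by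
  have h := T_id m
  calc ∑ k ∈ Finset.range (m + 1),
        2 * (((2 * k).choose k : ℝ) * (catalan (m - k) : ℝ))
      = ((2 * ∑ k ∈ Finset.range (m + 1),
          Nat.centralBinom k * catalan (m - k) : ℕ) : ℝ) := by
        push_cast [Finset.mul_sum, Nat.centralBinom]
        exact Finset.sum_congr rfl fun k hk => by ring
    _ = ((2 * (m + 1)).choose (m + 1) : ℝ) := by rw [h, Nat.centralBinom]

theorem E_strict_anti (x : ℝ) (hx0 : 0 ≤ x) (hx1 : x < 1) (m : ℕ) :
    E (m + 1) x < E m x := by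
  have hx1' : x ≤ 1 := le_of_lt hx1
  set c : ℕ → ℝ := fun k => ((2 * k).choose k : ℝ) with hc
  -- core inequality on the sums
  have core : (∑ k ∈ Finset.range (m + 2), c k * c (m + 1 - k) * x ^ k)
      < 4 * ∑ k ∈ Finset.range (m + 1), c k * c (m - k) * x ^ k := by
    have hrhs : 4 * ∑ k ∈ Finset.range (m + 1), c k * c (m - k) * x ^ k
        = (∑ k ∈ Finset.range (m + 1), c k * c (m + 1 - k) * x ^ k)
          + ∑ k ∈ Finset.range (m + 1),
              2 * (c k * (catalan (m - k) : ℝ)) * x ^ k := by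
      rw [Finset.mul_sum, ← Finset.sum_add_distrib]
      refine Finset.sum_congr rfl fun k hk => ?_
      have hk' : k ≤ m := Nat.lt_succ_iff.mp (Finset.mem_range.mp hk)
      have hsub : m + 1 - k = (m - k) + 1 := by omega
      have := cb_rec (m - k)
      have hcast : c ((m - k) + 1) + 2 * (catalan (m - k) : ℝ) = 4 * c (m - k) := by
        simp only [hc, Nat.centralBinom] at this ⊢
        exact_mod_cast congrArg (Nat.cast : ℕ → ℝ) this
      rw [hsub]
      linear_combination (-(c k * x ^ k)) * hcast
    have hlhs : (∑ k ∈ Finset.range (m + 2), c k * c (m + 1 - k) * x ^ k)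
        = (∑ k ∈ Finset.range (m + 1), c k * c (m + 1 - k) * x ^ k)
          + c (m + 1) * x ^ (m + 1) := by
      rw [Finset.sum_range_succ]
      simp [hc]
    rw [hrhs, hlhs]
    have hkey : c (m + 1) * x ^ (m + 1)
        < ∑ k ∈ Finset.range (m + 1), 2 * (c k * (catalan (m - k) : ℝ)) * x ^ k := by
      have hC : c (m + 1) = ∑ k ∈ Finset.range (m + 1),
          2 * (c k * (catalan (m - k) : ℝ)) := by
        rw [hc]; exact (T_id_real m).symm
      rw [hC, Finset.sum_mul]
      refine Finset.sum_lt_sum (fun k hk => ?_) ⟨0, Finset.mem_range.mpr (by omega), ?_⟩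
      · have hk' : k ≤ m := Nat.lt_succ_iff.mp (Finset.mem_range.mp hk)
        have hpow : x ^ (m + 1) ≤ x ^ k :=
          pow_le_pow_of_le_one hx0 hx1' (by omega)
        have hcoef : 0 ≤ 2 * (c k * (catalan (m - k) : ℝ)) := by
          have : (0:ℝ) ≤ c k := Nat.cast_nonneg _
          positivity
        exact mul_le_mul_of_nonneg_left hpow hcoef
      · have hpow : x ^ (m + 1) < x ^ 0 := by
          simpa using pow_lt_one₀ hx0 hx1 (Nat.succ_ne_zero m)
        have hcoef : 0 < 2 * (c 0 * (catalan (m - 0) : ℝ)) := by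
          simp only [hc, Nat.sub_zero]
          have h1 : 0 < catalan m := by
            have h2 := succ_mul_catalan_eq_centralBinom m
            have h3 := Nat.centralBinom_pos m
            by_contra h
            push_neg at h
            interval_cases hcat : catalan m
            omega
          have : (0:ℝ) < (catalan m : ℝ) := by exact_mod_cast h1
          norm_num [this]
        exact mul_lt_mul_of_pos_left hpow hcoef
    linarith
  -- assemble
  rw [E, E]
  have h4 : (0:ℝ) < (4:ℝ) ^ (-(((m:ℕ)+1 : ℕ) : ℤ)) := by positivity
  have hsplit : (4:ℝ) ^ (-((m : ℕ) : ℤ)) = (4:ℝ) ^ (-(((m+1 : ℕ)) : ℤ)) * 4 := by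
    have h := zpow_add₀ (by norm_num : (4:ℝ) ≠ 0) (-(((m:ℤ)) + 1)) 1
    push_cast
    rw [show -((m:ℤ)) = -((m:ℤ) + 1) + 1 by ring, h, zpow_one]
  rw [hsplit, mul_assoc]
  exact mul_lt_mul_of_pos_left (by simpa [hc] using core) h4
end

section
/- Let α = (27 - √385)/8 and β = (61 - √385)/24. Then for all natural numbers m ≥ 1, β^m · 4^{-m} · ∑_{k=0}^{m} C(2k,k)·C(2(m-k), m-k)·(α/β)^k < (2^m + 2)/3. -/
open Finset Nat

lemma sumT (n : ℕ) :
    2 * ∑ k ∈ range (n+1), (2*k+1) * (Nat.centralBinom k * Nat.centralBinom (n-k))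
      = (2*n+2) * ∑ k ∈ range (n+1), Nat.centralBinom k * Nat.centralBinom (n-k) := by
  have h : ∑ k ∈ range (n+1), (2*(n-k)+1) * (Nat.centralBinom (n-k) * Nat.centralBinom (n-(n-k)))
      = ∑ k ∈ range (n+1), (2*k+1) * (Nat.centralBinom k * Nat.centralBinom (n-k)) := by
    simpa using Finset.sum_range_reflect
      (fun k => (2*k+1) * (Nat.centralBinom k * Nat.centralBinom (n-k))) (n+1)
  calc 2 * ∑ k ∈ range (n+1), (2*k+1) * (Nat.centralBinom k * Nat.centralBinom (n-k))
      = (∑ k ∈ range (n+1), (2*k+1) * (Nat.centralBinom k * Nat.centralBinom (n-k)))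
        + ∑ k ∈ range (n+1), (2*(n-k)+1) * (Nat.centralBinom (n-k) * Nat.centralBinom (n-(n-k))) := by
        rw [h]; ring
    _ = ∑ k ∈ range (n+1), (2*n+2) * (Nat.centralBinom k * Nat.centralBinom (n-k)) := by
        rw [← Finset.sum_add_distrib]
        refine Finset.sum_congr rfl fun k hk => ?_
        have hk' : k ≤ n := Nat.lt_succ_iff.mp (Finset.mem_range.mp hk)
        have h1 : n - (n - k) = k := by omega
        have h2 : (2*k+1) + (2*(n-k)+1) = 2*n+2 := by omega
        rw [h1, mul_comm (Nat.centralBinom (n-k))]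
        rw [← add_mul, h2]
    _ = (2*n+2) * ∑ k ∈ range (n+1), Nat.centralBinom k * Nat.centralBinom (n-k) := by
        rw [Finset.mul_sum]

lemma cbConv (n : ℕ) :
    ∑ k ∈ range (n+1), Nat.centralBinom k * Nat.centralBinom (n-k) = 4 ^ n := by
  induction n with
  | zero => simp [Nat.centralBinom]
  | succ n ih =>
    have hshift : ∑ k ∈ range (n+2), k * (Nat.centralBinom k * Nat.centralBinom (n+1-k))
        = ∑ i ∈ range (n+1), (i+1) * (Nat.centralBinom (i+1) * Nat.centralBinom (n-i)) := by
      rw [Finset.sum_range_succ']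
      simp
    have hrec : ∑ i ∈ range (n+1), (i+1) * (Nat.centralBinom (i+1) * Nat.centralBinom (n-i))
        = 2 * ∑ i ∈ range (n+1), (2*i+1) * (Nat.centralBinom i * Nat.centralBinom (n-i)) := by
      rw [Finset.mul_sum]
      refine Finset.sum_congr rfl fun i _ => ?_
      rw [← mul_assoc, Nat.succ_mul_centralBinom_succ i]; ring
    have hk1 : ∑ k ∈ range (n+2), k * (Nat.centralBinom k * Nat.centralBinom (n+1-k))
        = (2*n+2) * 4^n := by
      rw [hshift, hrec, sumT n, ih]
    have hsplit : ∑ k ∈ range (n+2), (2*k+1) * (Nat.centralBinom k * Nat.centralBinom (n+1-k))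
        = 2 * (∑ k ∈ range (n+2), k * (Nat.centralBinom k * Nat.centralBinom (n+1-k)))
          + ∑ k ∈ range (n+2), Nat.centralBinom k * Nat.centralBinom (n+1-k) := by
      rw [Finset.mul_sum, ← Finset.sum_add_distrib]
      exact Finset.sum_congr rfl fun k _ => by ring
    have key : (2*(n+1)+2) * (∑ k ∈ range (n+2), Nat.centralBinom k * Nat.centralBinom (n+1-k))
        = 2 * (2 * ((2*n+2) * 4^n)
            + ∑ k ∈ range (n+2), Nat.centralBinom k * Nat.centralBinom (n+1-k)) := by
      rw [← sumT (n+1), hsplit, hk1]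
    -- cancel over ℝ
    have keyR : (2*(n+1)+2 : ℝ) * ((∑ k ∈ range (n+2), Nat.centralBinom k * Nat.centralBinom (n+1-k) : ℕ) : ℝ)
        = 2 * (2 * ((2*n+2) * 4^n)
            + ((∑ k ∈ range (n+2), Nat.centralBinom k * Nat.centralBinom (n+1-k) : ℕ) : ℝ)) := by
      exact_mod_cast key
    have hq : (2*(n:ℝ)+2) ≠ 0 := by positivity
    have hR : ((∑ k ∈ range (n+2), Nat.centralBinom k * Nat.centralBinom (n+1-k) : ℕ) : ℝ)
        = 4^(n+1) := by
      have h2 : (2*(n:ℝ)+2) * ((∑ k ∈ range (n+2), Nat.centralBinom k * Nat.centralBinom (n+1-k) : ℕ) : ℝ)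
          = (2*(n:ℝ)+2) * (4^(n+1)) := by push_cast at keyR ⊢; ring_nf at keyR ⊢; linarith
      exact mul_left_cancel₀ hq h2
    exact_mod_cast hR

set_option maxHeartbeats 1000000 in
theorem ghz_w_violation (m : ℕ) (hm : 1 ≤ m) :
    ((61 - Real.sqrt 385) / 24) ^ m *
        E m (((27 - Real.sqrt 385) / 8) / ((61 - Real.sqrt 385) / 24))
      < (2 ^ m + 2) / 3 := by
  set s := Real.sqrt 385 with hs
  have hs2 : s ^ 2 = 385 := Real.sq_sqrt (by norm_num)
  have hs0 : 0 ≤ s := Real.sqrt_nonneg _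
  have hsl : 19.62 < s := by nlinarith
  have hsu : s < 19.63 := by nlinarith
  set a : ℝ := (27 - s) / 8 with hadef
  set b : ℝ := (61 - s) / 24 with hbdef
  have ha : 0 < a := by rw [hadef]; nlinarith
  have hb : 0 < b := by rw [hbdef]; nlinarith
  have hab : a ≤ b := by rw [hadef, hbdef]; nlinarith
  have hbne : b ≠ 0 := ne_of_gt hb
  clear_value s a b
  -- Step C : key numeric inequality
  have hb17 : b < 1.725 := by rw [hbdef]; nlinarith
  have hs3 : s^3 = 385 * s := by nlinarith
  have key3 : ∀ n : ℕ, 3*a^(n+3) + 3*b^(n+3) < 2^(n+4) + 4 := by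
    intro n
    induction n with
    | zero =>
      rw [hadef, hbdef]
      norm_num
      nlinarith [hs2, hs3, hsl, hsu]
    | succ n ih =>
      have h16 : (16:ℝ) ≤ 2^(n+4) := by
        calc (16:ℝ) = 2^4 := by norm_num
          _ ≤ 2^(n+4) := pow_le_pow_right₀ one_le_two (by omega)
      have hpa : (0:ℝ) ≤ a^(n+3) := pow_nonneg ha.le _
      have hpb : (0:ℝ) ≤ b^(n+3) := pow_nonneg hb.le _
      have ea : a^(n+4) = a * a^(n+3) := by rw [pow_succ]; ring
      have eb : b^(n+4) = b * b^(n+3) := by rw [pow_succ]; ring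
      have c1 : 3*a^(n+4) + 3*b^(n+4) ≤ b * (3*a^(n+3) + 3*b^(n+3)) := by
        rw [ea, eb]
        nlinarith [mul_nonneg (sub_nonneg.2 hab) hpa]
      have c2 : b * (3*a^(n+3) + 3*b^(n+3)) < b * (2^(n+4) + 4) :=
        mul_lt_mul_of_pos_left ih hb
      have c3 : b * (2^(n+4) + 4) < 2^(n+5) + 4 := by
        have h2 : (2:ℝ)^(n+5) = 2 * 2^(n+4) := by rw [pow_succ]; ring
        nlinarith [h16, hb17, hb]
      linarith
  have hd : 3*a^m + 3*b^m < 2^(m+1) + 4 := by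
    rcases Nat.lt_or_ge m 3 with h3 | h3
    · interval_cases m
      · rw [hadef, hbdef]; norm_num; nlinarith
      · rw [hadef, hbdef]; norm_num; nlinarith
    · obtain ⟨n, rfl⟩ : ∃ n, m = n + 3 := ⟨m - 3, by omega⟩
      exact key3 n
  -- Step A : rewrite LHS
  have hE : b ^ m * E m (a / b)
      = (4:ℝ) ^ (-(m:ℤ)) * ∑ k ∈ range (m+1),
          ((Nat.centralBinom k : ℝ) * (Nat.centralBinom (m-k) : ℝ)) * (a^k * b^(m-k)) := by
    simp only [E, Nat.centralBinom]
    rw [← mul_assoc, mul_comm (b^m), mul_assoc, Finset.mul_sum]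
    congr 1
    refine Finset.sum_congr rfl fun k hk => ?_
    have hk' : k ≤ m := Nat.lt_succ_iff.mp (Finset.mem_range.mp hk)
    have hm' : m - k + k = m := Nat.sub_add_cancel hk'
    have hbk : (b:ℝ)^k ≠ 0 := pow_ne_zero _ hbne
    have hx : b^m * (a/b)^k = a^k * b^(m-k) := by
      rw [div_pow a b k, pow_sub₀ b hbne hk']
      ring
    calc b^m * (((2*k).choose k : ℝ) * ((2*(m-k)).choose (m-k) : ℝ) * (a/b)^k)
        = (((2*k).choose k : ℝ) * ((2*(m-k)).choose (m-k) : ℝ)) * (b^m * (a/b)^k) := by ring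
      _ = _ := by rw [hx]
  -- Step B : pairing bound on the sum
  set f : ℕ → ℝ := fun k =>
    ((Nat.centralBinom k : ℝ) * (Nat.centralBinom (m-k) : ℝ)) * (a^k * b^(m-k)) with hf
  have hre : ∑ k ∈ range (m+1), f (m - k) = ∑ k ∈ range (m+1), f k := by
    simpa using Finset.sum_range_reflect f (m+1)
  have hconv : (∑ k ∈ range (m+1),
      (Nat.centralBinom k : ℝ) * (Nat.centralBinom (m-k) : ℝ)) = 4 ^ m := by
    have := cbConv m
    have h := congrArg (fun x : ℕ => (x : ℝ)) this
    push_cast at h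
    exact h
  have h2S : 2 * ∑ k ∈ range (m+1), f k ≤ (a^m + b^m) * 4^m := by
    have step : ∑ k ∈ range (m+1), (f k + f (m-k))
        ≤ ∑ k ∈ range (m+1),
            ((Nat.centralBinom k : ℝ) * (Nat.centralBinom (m-k) : ℝ)) * (a^m + b^m) := by
      refine Finset.sum_le_sum fun k hk => ?_
      have hk' : k ≤ m := Nat.lt_succ_iff.mp (Finset.mem_range.mp hk)
      have hmk : m - (m - k) = k := by omega
      have h1 : a^k ≤ b^k := pow_le_pow_left₀ ha.le hab k
      have h2 : a^(m-k) ≤ b^(m-k) := pow_le_pow_left₀ ha.le hab (m-k)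
      have e1 : a^k * a^(m-k) = a^m := by rw [← pow_add]; congr 1; omega
      have e2 : b^k * b^(m-k) = b^m := by rw [← pow_add]; congr 1; omega
      have hpair : a^k * b^(m-k) + a^(m-k) * b^k ≤ a^m + b^m := by
        nlinarith [mul_nonneg (sub_nonneg.2 h1) (sub_nonneg.2 h2)]
      have hc : (0:ℝ) ≤ (Nat.centralBinom k : ℝ) * (Nat.centralBinom (m-k) : ℝ) :=
        mul_nonneg (Nat.cast_nonneg _) (Nat.cast_nonneg _)
      have hfk : f k + f (m-k)
          = ((Nat.centralBinom k : ℝ) * (Nat.centralBinom (m-k) : ℝ))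
            * (a^k * b^(m-k) + a^(m-k) * b^k) := by
        simp only [hf, hmk]
        ring
      rw [hfk]
      exact mul_le_mul_of_nonneg_left hpair hc
    calc 2 * ∑ k ∈ range (m+1), f k
        = (∑ k ∈ range (m+1), f k) + ∑ k ∈ range (m+1), f (m-k) := by rw [hre]; ring
      _ = ∑ k ∈ range (m+1), (f k + f (m-k)) := by rw [Finset.sum_add_distrib]
      _ ≤ ∑ k ∈ range (m+1),
            ((Nat.centralBinom k : ℝ) * (Nat.centralBinom (m-k) : ℝ)) * (a^m + b^m) := step
      _ = (∑ k ∈ range (m+1),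
            (Nat.centralBinom k : ℝ) * (Nat.centralBinom (m-k) : ℝ)) * (a^m + b^m) := by
          rw [Finset.sum_mul]
      _ = (a^m + b^m) * 4^m := by rw [hconv]; ring
  -- combine
  rw [hE]
  have h4 : (4:ℝ) ^ (-(m:ℤ)) = ((4:ℝ)^m)⁻¹ := by
    rw [zpow_neg, zpow_natCast]
  have h4pos : (0:ℝ) < (4:ℝ)^m := by positivity
  have hSle : ∑ k ∈ range (m+1), f k ≤ 4^m * ((a^m + b^m)/2) := by linarith
  have hfin : (4:ℝ) ^ (-(m:ℤ)) * ∑ k ∈ range (m+1), f k ≤ (a^m + b^m)/2 := by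
    rw [h4]
    calc ((4:ℝ)^m)⁻¹ * ∑ k ∈ range (m+1), f k
        ≤ ((4:ℝ)^m)⁻¹ * (4^m * ((a^m + b^m)/2)) := by
          apply mul_le_mul_of_nonneg_left hSle (by positivity)
      _ = (a^m + b^m)/2 := by
          rw [inv_mul_cancel_left₀ (ne_of_gt h4pos)]
  have h2m : (2:ℝ)^(m+1) = 2 * 2^m := by rw [pow_succ]; ring
  calc (4:ℝ) ^ (-(m:ℤ)) * ∑ k ∈ range (m+1), f k ≤ (a^m + b^m)/2 := hfin
    _ < (2^m + 2)/3 := by nlinarith [hd, h2m]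
end

section
/- Let a > 1 and e₋ = (a² - 1 - √((a²-1)(9a²-1)))/(4a), e₊ = (a² - 1 + √((a²-1)(9a²-1)))/(4a). Let A_a be the 3×3 matrix with diagonal entries a and off-diagonal entries e₋. Then A_a is invertible and its inverse is the 3×3 matrix with diagonal entries a and off-diagonal entries e₊. -/
theorem ghzw_matrix_inverse (a : ℝ) (ha : 1 < a) :
    let em : ℝ := (a ^ 2 - 1 - Real.sqrt ((a ^ 2 - 1) * (9 * a ^ 2 - 1))) / (4 * a)
    let ep : ℝ := (a ^ 2 - 1 + Real.sqrt ((a ^ 2 - 1) * (9 * a ^ 2 - 1))) / (4 * a)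
    let A : Matrix (Fin 3) (Fin 3) ℝ := Matrix.of ![![a, em, em], ![em, a, em], ![em, em, a]]
    let B : Matrix (Fin 3) (Fin 3) ℝ := Matrix.of ![![a, ep, ep], ![ep, a, ep], ![ep, ep, a]]
    IsUnit A ∧ A⁻¹ = B := by
  intro em ep A B
  have ha0 : a ≠ 0 := by positivity
  have h1' : (0:ℝ) ≤ a ^ 2 - 1 := by nlinarith
  have h2' : (0:ℝ) ≤ 9 * a ^ 2 - 1 := by nlinarith
  have hs : Real.sqrt ((a ^ 2 - 1) * (9 * a ^ 2 - 1)) ^ 2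
      = (a ^ 2 - 1) * (9 * a ^ 2 - 1) := Real.sq_sqrt (mul_nonneg h1' h2')
  set s := Real.sqrt ((a ^ 2 - 1) * (9 * a ^ 2 - 1)) with hsdef
  have hsum : em + ep = (a ^ 2 - 1) / (2 * a) := by
    show (a ^ 2 - 1 - s) / (4 * a) + (a ^ 2 - 1 + s) / (4 * a) = _
    field_simp; ring
  have hprod : em * ep = -(a ^ 2 - 1) / 2 := by
    show (a ^ 2 - 1 - s) / (4 * a) * ((a ^ 2 - 1 + s) / (4 * a)) = _
    field_simp; nlinarith [hs]
  have hd : a * a + (em * ep + em * ep) = 1 := by nlinarith [hprod]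
  have ho : a * (em + ep) + em * ep = 0 := by
    rw [hsum, hprod]; field_simp; ring
  clear_value em ep
  have hAB : A * B = 1 := by
    show (!![a, em, em; em, a, em; em, em, a] : Matrix (Fin 3) (Fin 3) ℝ)
        * !![a, ep, ep; ep, a, ep; ep, ep, a] = 1
    rw [Matrix.mul_fin_three, Matrix.one_fin_three]
    ext i j
    fin_cases i <;> fin_cases j <;>
      simp [Matrix.vecHead, Matrix.vecTail] <;> first | linear_combination hd | linear_combination ho
  have hdet : A.det * B.det = 1 := by rw [← Matrix.det_mul, hAB, Matrix.det_one]
  exact ⟨(Matrix.isUnit_iff_isUnit_det A).2 (IsUnit.of_mul_eq_one _ hdet),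
    Matrix.inv_eq_right_inv hAB⟩
end
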